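/- arXiv:2306.00302 — 2 statements merged into one kernel-verified Lean document; each statement's English description precedes it below -/
import Mathlib

section
/- Let B_R ⊂ ℝ² be the open disk of radius R > 0 centered at the origin and let u ∈ C¹(cl B_R) be locally symmetric: B_R is the union of pairwise disjoint open annuli A_k = B_{R_k}(z_k) \ cl B_{r_k}(z_k) (z_k ∈ B_R, 0 ≤ r_k < R_k), on each of which u(x) = U_k(|x − z_k|) with U_k ∈ C¹([r_k, R_k]) and U_k' < 0 on (r_k, R_k), together with the set { x : ∇u(x) = 0 }. Assume in addition that u has exactly one critical point z in B_R (∇u(z) = 0 and ∇u(x) ≠ 0 for x ∈ B_R \ {z}). Then u is radially symmetric about z and radially strictly decreasing; in particular there is exactly one annulus in the decomposition, its center is z, its inner radius is 0, and its outer radius is R. -/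
open Set Metric Filter Topology

noncomputable section

/-- The plane `ℝ²`, realized as a Euclidean space. -/
abbrev E2 : Type := EuclideanSpace ℝ (Fin 2)


lemma E2_rank : 1 < Module.rank ℝ E2 := by
  rw [← Module.finrank_eq_rank, finrank_euclideanSpace_fin]
  exact_mod_cast one_lt_two

lemma joinedIn_ball_diff_singleton {R : ℝ} {z a b : E2}
    (ha : a ∈ ball (0:E2) R \ {z}) (hb : b ∈ ball (0:E2) R \ {z}) :
    JoinedIn (ball (0:E2) R \ {z}) a b := by
  by_cases hseg : z ∈ segment ℝ a b
  · -- z on the segment; go around through a generic point w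
    have hzball : z ∈ ball (0:E2) R := (convex_ball (0:E2) R).segment_subset ha.1 hb.1 hseg
    have hza : a ≠ z := ha.2
    have hzb : b ≠ z := hb.2
    have hab : a ≠ b := by
      rintro rfl
      rw [segment_same] at hseg
      exact hza (mem_singleton_iff.1 hseg).symm
    obtain ⟨θ, hθ01, hθ⟩ := (segment_eq_image' ℝ a b ▸ hseg : z ∈ _)
    obtain ⟨y, hy⟩ : ∃ y, LinearIndependent ℝ ![b - a, y] :=
      exists_linearIndependent_pair_of_one_lt_rank E2_rank (sub_ne_zero.2 hab.symm)
    have hyne : y ≠ 0 := by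
      intro h
      exact (hy.ne_zero 1) (by simp [h])
    have hRz : 0 < R - ‖z‖ := by
      have := mem_ball_zero_iff.1 hzball
      linarith
    set ε : ℝ := (R - ‖z‖) / (2 * (‖y‖ + 1)) with hε_def
    have hden : 0 < 2 * (‖y‖ + 1) := by positivity
    have hε : 0 < ε := div_pos hRz hden
    set w : E2 := z + ε • y with hw_def
    have hwz : w ≠ z := by
      simp only [hw_def, ne_eq, add_eq_left, smul_eq_zero, not_or]
      exact ⟨hε.ne', hyne⟩
    have hwball : w ∈ ball (0:E2) R := by
      rw [mem_ball_zero_iff]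
      calc ‖z + ε • y‖ ≤ ‖z‖ + ‖ε • y‖ := norm_add_le _ _
        _ = ‖z‖ + ε * ‖y‖ := by rw [norm_smul, Real.norm_of_nonneg hε.le]
        _ < ‖z‖ + (R - ‖z‖) := by
            have : ε * ‖y‖ < (R - ‖z‖) := by
              rw [hε_def, div_mul_eq_mul_div, div_lt_iff₀ hden]
              nlinarith [norm_nonneg y]
            linarith
        _ = R := by ring
    have hw : w ∈ ball (0:E2) R \ {z} := ⟨hwball, hwz⟩
    -- z is not on [a, w]
    have claim1 : z ∉ segment ℝ a w := by
      intro hz'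
      obtain ⟨t, ht01, ht⟩ := (segment_eq_image' ℝ a w ▸ hz' : z ∈ _)
      have key : (θ - t*θ) • (b - a) + (-(t*ε)) • y = 0 := by
        have h1 : a + θ • (b - a) = z := hθ
        have h2 : a + t • (z + ε • y - a) = z := by rw [← hw_def]; exact ht
        linear_combination (norm := module) (1 - t) • h1 - h2
      obtain ⟨-, h2⟩ := hy.eq_zero_of_pair key
      have ht0 : t = 0 := by
        rcases mul_eq_zero.1 (neg_eq_zero.1 h2) with h | h
        · exact h
        · exact absurd h hε.ne'
      rw [ht0] at ht
      simp at ht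
      exact hza ht
    -- z is not on [w, b]
    have claim2 : z ∉ segment ℝ w b := by
      intro hz'
      obtain ⟨t, ht01, ht⟩ := (segment_eq_image' ℝ w b ▸ hz' : z ∈ _)
      have key : (t - t*θ) • (b - a) + ((1-t)*ε) • y = 0 := by
        have h1 : a + θ • (b - a) = z := hθ
        have h2 : (z + ε • y) + t • (b - (z + ε • y)) = z := by rw [← hw_def]; exact ht
        linear_combination (norm := module) (-t) • h1 + h2
      obtain ⟨-, h2⟩ := hy.eq_zero_of_pair key
      have ht1 : t = 1 := by
        rcases mul_eq_zero.1 h2 with h | h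
        · linarith [sub_eq_zero.1 h]
        · exact absurd h hε.ne'
      rw [ht1] at ht
      simp at ht
      exact hzb ht
    have J1 : JoinedIn (ball (0:E2) R \ {z}) a w := by
      apply JoinedIn.of_segment_subset
      intro p hp
      exact ⟨(convex_ball (0:E2) R).segment_subset ha.1 hwball hp,
        fun h => claim1 (mem_singleton_iff.1 h ▸ hp)⟩
    have J2 : JoinedIn (ball (0:E2) R \ {z}) w b := by
      apply JoinedIn.of_segment_subset
      intro p hp
      exact ⟨(convex_ball (0:E2) R).segment_subset hwball hb.1 hp,
        fun h => claim2 (mem_singleton_iff.1 h ▸ hp)⟩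
    exact J1.trans J2
  · apply JoinedIn.of_segment_subset
    intro p hp
    exact ⟨(convex_ball (0:E2) R).segment_subset ha.1 hb.1 hp,
      fun h => hseg (mem_singleton_iff.1 h ▸ hp)⟩

/-- **Deduction step of the main theorem.** If `u ∈ C¹(cl B_R)` is locally symmetric in the disk
`B_R ⊆ ℝ²` — i.e. `B_R` is the union of pairwise disjoint open annuli
`A_k = B_{R_k}(z_k) \ cl B_{r_k}(z_k)`, on each of which `u(x) = U_k(|x - z_k|)` with
`U_k ∈ C¹([r_k, R_k])` and `U_k' < 0` on `(r_k, R_k)`, together with the critical set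
`{∇u = 0}` — and if `u` has exactly one critical point `z` in `B_R`, then `u` is radially
symmetric about `z` and radially strictly decreasing; in particular there is exactly one annulus
in the decomposition, its center is `z`, its inner radius is `0` and its outer radius is `R`. -/
theorem locally_symmetric_unique_critical_point_radial
    (R : ℝ) (hR : 0 < R)
    (u : E2 → ℝ)
    (hu : ContDiffOn ℝ 1 u (closure (ball (0 : E2) R)))
    (K : Set ℕ) (c : ℕ → E2) (r₀ R₀ : ℕ → ℝ) (U U' : ℕ → ℝ → ℝ)
    (hannuli : ∀ k ∈ K, c k ∈ ball (0 : E2) R ∧ 0 ≤ r₀ k ∧ r₀ k < R₀ k)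
    -- the annuli A_k are pairwise disjoint
    (hdisj : K.PairwiseDisjoint fun k => ball (c k) (R₀ k) \ closedBall (c k) (r₀ k))
    -- B_R is covered by the annuli together with the critical set of u
    (hcover : ball (0 : E2) R =
      (⋃ k ∈ K, ball (c k) (R₀ k) \ closedBall (c k) (r₀ k)) ∪
        {x ∈ ball (0 : E2) R | gradient u x = 0})
    -- u(x) = U_k(|x - z_k|) on A_k, with U_k ∈ C¹([r_k, R_k]) (derivative U'_k)
    (hradial : ∀ k ∈ K,
      (∀ r ∈ Icc (r₀ k) (R₀ k), HasDerivWithinAt (U k) (U' k r) (Icc (r₀ k) (R₀ k)) r) ∧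
      ContinuousOn (U' k) (Icc (r₀ k) (R₀ k)) ∧
      ∀ x ∈ ball (c k) (R₀ k) \ closedBall (c k) (r₀ k), u x = U k ‖x - c k‖)
    -- U_k' < 0 on (r_k, R_k)
    (hdec : ∀ k ∈ K, ∀ r ∈ Ioo (r₀ k) (R₀ k), U' k r < 0)
    -- z is the unique critical point of u in B_R
    (z : E2) (hz : z ∈ ball (0 : E2) R) (hzcrit : gradient u z = 0)
    (hcrit : ∀ x ∈ ball (0 : E2) R, x ≠ z → gradient u x ≠ 0) :
    -- u is radially symmetric about z and radially strictly decreasing,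
    (∀ x ∈ ball (0 : E2) R, ∀ y ∈ ball (0 : E2) R, ‖x - z‖ = ‖y - z‖ → u x = u y) ∧
    (∀ x ∈ ball (0 : E2) R, ∀ y ∈ ball (0 : E2) R, ‖x - z‖ < ‖y - z‖ → u y < u x) ∧
    -- and there is exactly one annulus: centered at z, inner radius 0, outer radius R
    (∃! k, k ∈ K) ∧ (∀ k ∈ K, c k = z ∧ r₀ k = 0 ∧ R₀ k = R) := by
  set B : Set E2 := ball (0 : E2) R with hB_def
  set A : ℕ → Set E2 := fun k => ball (c k) (R₀ k) \ closedBall (c k) (r₀ k) with hA_def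
  set T : Set E2 := ⋃ k ∈ K, A k with hT_def
  set S : Set E2 := B \ {z} with hS_def
  -- a fixed unit vector
  set v : E2 := EuclideanSpace.single (0 : Fin 2) (1 : ℝ) with hv_def
  have hv : ‖v‖ = 1 := by simp [hv_def, EuclideanSpace.norm_single]
  have hptc : ∀ (w : E2) (t : ℝ), ‖(w + t • v) - w‖ = |t| := by
    intro w t
    rw [add_sub_cancel_left, norm_smul, hv, mul_one, Real.norm_eq_abs]
  have hpt : ∀ t : ℝ, ‖(z + t • v) - z‖ = |t| := fun t => hptc z t
  -- basic inclusions
  have hTB : T ⊆ B := by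
    rw [hcover]; exact subset_union_left
  have hST : S ⊆ T := by
    rintro x ⟨hxB, hxz⟩
    have := hcover ▸ hxB
    rcases this with h | h
    · exact h
    · exact absurd h.2 (hcrit x hxB (by simpa using hxz))
  have hAopen : ∀ k, IsOpen (A k) := fun k => isOpen_ball.sdiff Metric.isClosed_closedBall
  have hAnonempty : ∀ k ∈ K, (A k).Nonempty := by
    intro k hk
    obtain ⟨-, hr0, hrR⟩ := hannuli k hk
    refine ⟨c k + ((r₀ k + R₀ k) / 2) • v, ?_, ?_⟩
    · rw [mem_ball_iff_norm]
      rw [hptc, abs_of_nonneg (by linarith)]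
      linarith
    · rw [mem_closedBall_iff_norm]
      push_neg
      rw [hptc, abs_of_nonneg (by linarith)]
      linarith
  -- S is nonempty
  have hzR : ‖z‖ < R := mem_ball_zero_iff.1 hz
  have hsmall : ∀ t : ℝ, 0 < t → t < R - ‖z‖ → z + t • v ∈ S := by
    intro t ht htR
    constructor
    · rw [hB_def, mem_ball_zero_iff]
      calc ‖z + t • v‖ ≤ ‖z‖ + ‖t • v‖ := norm_add_le _ _
        _ = ‖z‖ + t := by rw [norm_smul, hv, Real.norm_of_nonneg ht.le, mul_one]
        _ < R := by linarith
    · simp only [mem_singleton_iff, add_eq_left]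
      intro h
      rw [smul_eq_zero] at h
      rcases h with h | h
      · exact ht.ne' h
      · exact absurd (congrArg norm h) (by simp [hv])
  have hSne : S.Nonempty :=
    ⟨z + ((R - ‖z‖)/2) • v, hsmall _ (by linarith) (by linarith)⟩
  -- S is preconnected
  have hSpre : IsPreconnected S := by
    obtain ⟨p, hp⟩ := hSne
    have : IsPathConnected S := ⟨p, hp, fun {q} hq => joinedIn_ball_diff_singleton hp hq⟩
    exact this.isConnected.isPreconnected
  -- T is preconnected: S ⊆ T ⊆ B ⊆ closure S
  have hBclS : B ⊆ closure S := by
    intro x hx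
    rcases eq_or_ne x z with rfl | hxz
    · have hc : Continuous (fun t : ℝ => x + t • v) :=
        continuous_const.add (continuous_id.smul continuous_const)
      have htd : Tendsto (fun t : ℝ => x + t • v) (𝓝[>] (0:ℝ)) (𝓝 x) := by
        have h0 : Tendsto (fun t : ℝ => x + t • v) (𝓝 (0:ℝ)) (𝓝 x) := by
          simpa using hc.tendsto 0
        exact h0.mono_left nhdsWithin_le_nhds
      refine mem_closure_of_tendsto htd ?_
      have hx' : (0:ℝ) < R - ‖x‖ := by
        have := mem_ball_zero_iff.1 hx
        linarith
      filter_upwards [Ioo_mem_nhdsGT_of_mem ⟨le_refl (0:ℝ), hx'⟩] with t ht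
      exact hsmall t ht.1 ht.2
    · exact subset_closure ⟨hx, hxz⟩
  have hTpre : IsPreconnected T := hSpre.subset_closure hST (hTB.trans hBclS)
  -- there is exactly one annulus
  obtain ⟨p, hpS⟩ := hSne
  obtain ⟨k0, hk0K, hpk0⟩ : ∃ k ∈ K, p ∈ A k := by simpa [hT_def] using hST hpS
  have hunique : ∀ j ∈ K, j = k0 := by
    intro j hj
    by_contra hjk
    have hVopen : IsOpen (⋃ i ∈ K \ {k0}, A i) :=
      isOpen_biUnion fun i _ => hAopen i
    have hdisj' : Disjoint (A k0) (⋃ i ∈ K \ {k0}, A i) := by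
      rw [disjoint_iff_inter_eq_empty, inter_iUnion₂]
      simp only [iUnion_eq_empty]
      intro i hi
      exact disjoint_iff_inter_eq_empty.1 (hdisj hk0K hi.1 (Ne.symm hi.2))
    have hTsub : T ⊆ A k0 ∪ ⋃ i ∈ K \ {k0}, A i := by
      intro x hx
      obtain ⟨i, hiK, hxi⟩ : ∃ i ∈ K, x ∈ A i := by simpa [hT_def] using hx
      rcases eq_or_ne i k0 with rfl | hik
      · exact Or.inl hxi
      · exact Or.inr (mem_biUnion ⟨hiK, hik⟩ hxi)
    have hTA : T ⊆ A k0 :=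
      hTpre.subset_left_of_subset_union (hAopen k0) hVopen hdisj' hTsub
        ⟨p, hST hpS, hpk0⟩
    obtain ⟨q, hq⟩ := hAnonempty j hj
    have hqT : q ∈ T := mem_biUnion hj hq
    have : q ∈ A k0 := hTA hqT
    exact (disjoint_left.1 (hdisj hj hk0K hjk) hq) this
  -- the annulus is centered at z
  have hcz : c k0 = z := by
    by_contra hne
    have hcS : c k0 ∈ S := ⟨(hannuli k0 hk0K).1, by simpa using hne⟩
    have : c k0 ∈ A k0 := by
      have hcT := hST hcS
      obtain ⟨i, hiK, hxi⟩ : ∃ i ∈ K, c k0 ∈ A i := by simpa [hT_def] using hcT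
      rwa [hunique i hiK] at hxi
    exact this.2 (mem_closedBall_self (hannuli k0 hk0K).2.1)
  -- inner radius is 0
  have hr00 : r₀ k0 = 0 := by
    by_contra hne
    have hr0pos : 0 < r₀ k0 := lt_of_le_of_ne (hannuli k0 hk0K).2.1 (Ne.symm hne)
    set t : ℝ := min (r₀ k0) (R - ‖z‖) / 2 with ht_def
    have htpos : 0 < t := by
      apply div_pos (lt_min hr0pos (by linarith)) two_pos
    have hq : z + t • v ∈ S := hsmall t htpos (by
      have h' : t ≤ (R - ‖z‖)/2 := by
        rw [ht_def]
        have := min_le_right (r₀ k0) (R - ‖z‖)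
        linarith
      linarith)
    have hqA : z + t • v ∈ A k0 := by
      have hcT := hST hq
      obtain ⟨i, hiK, hxi⟩ : ∃ i ∈ K, z + t • v ∈ A i := by simpa [hT_def] using hcT
      rwa [hunique i hiK] at hxi
    apply hqA.2
    rw [mem_closedBall_iff_norm, hcz, hpt, abs_of_nonneg htpos.le]
    have h' : t ≤ r₀ k0 / 2 := by
      rw [ht_def]
      have := min_le_left (r₀ k0) (R - ‖z‖)
      linarith
    linarith
  -- A k0 = S
  have hzA : z ∉ A k0 := by
    intro h
    exact h.2 (by rw [hcz]; exact mem_closedBall_self (by rw [hr00]))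
  have hAS : A k0 = S := by
    apply Subset.antisymm
    · intro x hx
      refine ⟨hTB (mem_biUnion hk0K hx), ?_⟩
      intro h
      exact hzA (mem_singleton_iff.1 h ▸ hx)
    · intro x hx
      have hxT := hST hx
      obtain ⟨i, hiK, hxi⟩ : ∃ i ∈ K, x ∈ A i := by simpa [hT_def] using hxT
      rwa [hunique i hiK] at hxi
  -- balls coincide
  have hR0pos : 0 < R₀ k0 := lt_of_le_of_lt (hannuli k0 hk0K).2.1 (hannuli k0 hk0K).2.2
  have hballs : ball z (R₀ k0) = B := by
    have h1 : A k0 = ball z (R₀ k0) \ {z} := by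
      rw [hA_def]
      simp only [hcz, hr00, closedBall_zero]
    ext x
    rcases eq_or_ne x z with rfl | hxz
    · simp [mem_ball_self hR0pos, hB_def, mem_ball_zero_iff, hzR]
    · constructor
      · intro hx
        have : x ∈ A k0 := by rw [h1]; exact ⟨hx, hxz⟩
        exact (hAS.subset this).1
      · intro hx
        have : x ∈ A k0 := hAS.symm.subset ⟨hx, hxz⟩
        exact (h1.subset this).1
  -- outer radius is R
  have hRR : R₀ k0 = R := by
    have hcl : closedBall z (R₀ k0) = closedBall (0:E2) R := by
      rw [← closure_ball z hR0pos.ne', ← closure_ball (0:E2) hR.ne', hballs]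
    have h1 : ‖(z + R₀ k0 • v) - z‖ ≤ R₀ k0 := by
      rw [hpt, abs_of_nonneg hR0pos.le]
    have h2 : ‖(z - R₀ k0 • v) - z‖ ≤ R₀ k0 := by
      have : (z - R₀ k0 • v) - z = -(R₀ k0 • v) := by abel
      rw [this, norm_neg, norm_smul, hv, mul_one, Real.norm_of_nonneg hR0pos.le]
    have m1 : z + R₀ k0 • v ∈ closedBall (0:E2) R := by
      rw [← hcl, mem_closedBall_iff_norm]; exact h1
    have m2 : z - R₀ k0 • v ∈ closedBall (0:E2) R := by
      rw [← hcl, mem_closedBall_iff_norm]; exact h2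
    have m3 : (0:E2) + R • v ∈ closedBall z (R₀ k0) := by
      rw [hcl, mem_closedBall_iff_norm]
      simp [norm_smul, hv, abs_of_nonneg hR.le]
    have m4 : (0:E2) - R • v ∈ closedBall z (R₀ k0) := by
      rw [hcl, mem_closedBall_iff_norm]
      simp [norm_smul, hv, abs_of_nonneg hR.le]
    have e1 : (2 * R₀ k0) ≤ 2 * R := by
      have : ‖(z + R₀ k0 • v) - (z - R₀ k0 • v)‖ = 2 * R₀ k0 := by
        have : (z + R₀ k0 • v) - (z - R₀ k0 • v) = (2 * R₀ k0) • v := by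
          rw [two_mul, add_smul]; abel
        rw [this, norm_smul, hv, mul_one, Real.norm_of_nonneg (by linarith)]
      calc (2 * R₀ k0) = ‖(z + R₀ k0 • v) - (z - R₀ k0 • v)‖ := this.symm
        _ ≤ ‖z + R₀ k0 • v‖ + ‖z - R₀ k0 • v‖ := norm_sub_le _ _
        _ ≤ R + R := add_le_add (mem_closedBall_zero_iff.1 m1) (mem_closedBall_zero_iff.1 m2)
        _ = 2 * R := by ring
    have e2 : (2 * R) ≤ 2 * R₀ k0 := by
      have he : ((0:E2) + R • v) - ((0:E2) - R • v) = (2 * R) • v := by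
        rw [two_mul, add_smul]; abel
      calc (2 * R) = ‖((0:E2) + R • v) - ((0:E2) - R • v)‖ := by
            rw [he, norm_smul, hv, mul_one, Real.norm_of_nonneg (by linarith)]
        _ ≤ ‖((0:E2) + R • v) - z‖ + ‖z - ((0:E2) - R • v)‖ := norm_sub_le_norm_sub_add_norm_sub _ _ _
        _ ≤ R₀ k0 + R₀ k0 := by
            apply add_le_add (mem_closedBall_iff_norm.1 m3)
            rw [← norm_neg]
            rw [show -(z - ((0:E2) - R • v)) = ((0:E2) - R • v) - z by abel]
            exact mem_closedBall_iff_norm.1 m4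
        _ = 2 * R₀ k0 := by ring
    linarith
  -- key: u equals U k0 of distance to z on S
  have hkey : ∀ x ∈ S, u x = U k0 ‖x - z‖ := by
    intro x hx
    have := (hradial k0 hk0K).2.2 x (hAS.symm.subset hx)
    rwa [hcz] at this
  -- the Icc
  have hIcc : Icc (r₀ k0) (R₀ k0) = Icc 0 R := by rw [hr00, hRR]
  have hderiv : ∀ r ∈ Icc (0:ℝ) R, HasDerivWithinAt (U k0) (U' k0 r) (Icc 0 R) r := by
    have := (hradial k0 hk0K).1
    rwa [hIcc] at this
  have hcontU : ContinuousOn (U k0) (Icc 0 R) :=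
    fun r hr => (hderiv r hr).continuousWithinAt
  -- u z = U k0 0
  have hBz : B = ball z R := by rw [← hballs, hRR]
  have huz : u z = U k0 0 := by
    have hucont : ContinuousAt u z := by
      apply (hu.continuousOn).continuousAt
      exact Filter.mem_of_superset (isOpen_ball.mem_nhds hz) subset_closure
    have hF : (𝓝[Ioo (0:ℝ) R] 0).NeBot := by
      apply mem_closure_iff_nhdsWithin_neBot.1
      rw [closure_Ioo hR.ne]
      exact ⟨le_refl 0, hR.le⟩
    have t1 : Tendsto (fun t : ℝ => u (z + t • v)) (𝓝[Ioo (0:ℝ) R] 0) (𝓝 (u z)) := by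
      have hc : Continuous (fun t : ℝ => z + t • v) :=
        continuous_const.add (continuous_id.smul continuous_const)
      have : Tendsto (fun t : ℝ => z + t • v) (𝓝[Ioo (0:ℝ) R] 0) (𝓝 z) := by
        have h0 : Tendsto (fun t : ℝ => z + t • v) (𝓝 (0:ℝ)) (𝓝 z) := by
          simpa using hc.tendsto 0
        exact h0.mono_left nhdsWithin_le_nhds
      exact hucont.tendsto.comp this
    have t1' : Tendsto (fun t : ℝ => U k0 t) (𝓝[Ioo (0:ℝ) R] 0) (𝓝 (u z)) := by
      apply t1.congr'
      filter_upwards [self_mem_nhdsWithin] with t ht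
      have hmem : z + t • v ∈ S := by
        rw [hS_def, hBz]
        constructor
        · rw [mem_ball_iff_norm, hpt, abs_of_nonneg ht.1.le]; exact ht.2
        · simp only [mem_singleton_iff, add_eq_left]
          intro h
          rw [smul_eq_zero] at h
          rcases h with h | h
          · exact ht.1.ne' h
          · exact absurd (congrArg norm h) (by simp [hv])
      rw [hkey _ hmem, hpt, abs_of_nonneg ht.1.le]
    have t2 : Tendsto (U k0) (𝓝[Ioo (0:ℝ) R] 0) (𝓝 (U k0 0)) := by
      apply (hcontU 0 ⟨le_refl 0, hR.le⟩).tendsto.mono_left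
      apply nhdsWithin_mono
      exact Ioo_subset_Icc_self
    exact tendsto_nhds_unique t1' t2
  -- u = U k0 ∘ dist on all of B
  have hkey2 : ∀ x ∈ B, u x = U k0 ‖x - z‖ := by
    intro x hx
    rcases eq_or_ne x z with rfl | hxz
    · simpa using huz
    · exact hkey x ⟨hx, hxz⟩
  have hmemIcc : ∀ x ∈ B, ‖x - z‖ ∈ Icc (0:ℝ) R := by
    intro x hx
    rw [hBz, mem_ball_iff_norm] at hx
    exact ⟨norm_nonneg _, hx.le⟩
  -- strict antitonicity
  have hanti : StrictAntiOn (U k0) (Icc 0 R) := by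
    apply strictAntiOn_of_deriv_neg (convex_Icc 0 R) hcontU
    intro x hx
    rw [interior_Icc] at hx
    have hd : HasDerivAt (U k0) (U' k0 x) x := by
      apply (hderiv x (Ioo_subset_Icc_self hx)).hasDerivAt
      exact Icc_mem_nhds hx.1 hx.2
    rw [hd.deriv]
    have := hdec k0 hk0K x
    rw [hr00, hRR] at this
    exact this hx
  refine ⟨?_, ?_, ⟨k0, hk0K, fun j hj => hunique j hj⟩, ?_⟩
  · intro x hx y hy hxy
    rw [hkey2 x hx, hkey2 y hy, hxy]
  · intro x hx y hy hxy
    rw [hkey2 x hx, hkey2 y hy]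
    exact hanti (hmemIcc x hx) (hmemIcc y hy) hxy
  · intro j hj
    rw [hunique j hj]
    exact ⟨hcz, hr00, hRR⟩
end
end

section
/- Let D ⊂ ℝ² be the open disk of radius R > 0 centered at the origin, let v ∈ C²(cl D) solve the stationary 2D Euler equations in D with v·n = 0 on ∂D, assume v has a unique stagnation point z ∈ D, and let u ∈ C³(cl D) be the stream function of v, normalized so that u = 0 on ∂D and 0 < u < u(z) in D \ {z}. Then the vorticity Δu is constant on the boundary circle ∂D: there is d ∈ ℝ with Δu(x) = d for all x ∈ ∂D. -/
open Set Metric Filter Topology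

noncomputable section

/-- The `i`-th standard basis vector of `ℝ²`. -/
def e2 (i : Fin 2) : E2 := EuclideanSpace.single i (1 : ℝ)

/-- The partial derivative `∂ᵢ f` of a scalar function on `ℝ²`. -/
def pd (i : Fin 2) (f : E2 → ℝ) (x : E2) : ℝ := fderiv ℝ f x (e2 i)

/-- The partial derivative `∂ᵢ f` within a set `s` (used for functions of class `Cᵏ` up to the
boundary of `s`). -/
def pdW (s : Set E2) (i : Fin 2) (f : E2 → ℝ) (x : E2) : ℝ := fderivWithin ℝ f s x (e2 i)

/-- The Laplacian `Δf = ∂₁₁f + ∂₂₂f`, computed with derivatives within `s`. -/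
def lapW (s : Set E2) (f : E2 → ℝ) (x : E2) : ℝ := ∑ i, pdW s i (pdW s i f) x

section Helpers
set_option maxHeartbeats 1000000
open Real

lemma decompE2 (y : E2) : y = y 0 • e2 0 + y 1 • e2 1 := by
  ext j; fin_cases j <;> simp [e2, EuclideanSpace.single_apply]

lemma clm_decomp {F : Type} [NormedAddCommGroup F] [NormedSpace ℝ F] (L : E2 →L[ℝ] F) (y : E2) :
    L y = y 0 • L (e2 0) + y 1 • L (e2 1) := by
  conv_lhs => rw [decompE2 y]; simp

lemma clm_ext2 {L M : E2 →L[ℝ] ℝ} (h0 : L (e2 0) = M (e2 0)) (h1 : L (e2 1) = M (e2 1)) :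
    L = M := by
  ext y; rw [clm_decomp L, clm_decomp M, h0, h1]

lemma partA (R : ℝ) (v : E2 → E2) (P u : E2 → ℝ)
    (hv : ContDiffOn ℝ 2 v (closedBall 0 R))
    (hP : ContDiffOn ℝ 1 P (ball (0 : E2) R))
    (momentum : ∀ x ∈ ball (0 : E2) R, ∀ i : Fin 2,
      ∑ j, v x j * fderiv ℝ (fun y => v y i) x (e2 j) = - pd i P x)
    (incomp : ∀ x ∈ ball (0 : E2) R,
      ∑ i, fderiv ℝ (fun y => v y i) x (e2 i) = 0)
    (hstream : ∀ x ∈ closedBall (0:E2) R,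
      pdW (closedBall 0 R) 0 u x = v x 1 ∧ pdW (closedBall 0 R) 1 u x = -(v x 0))
    (x : E2) (hx : x ∈ ball (0:E2) R) :
    fderivWithin ℝ (lapW (closedBall 0 R) u) (closedBall 0 R) x (v x) = 0 := by
  have hsx : closedBall (0:E2) R ∈ 𝓝 x :=
    mem_of_superset (isOpen_ball.mem_nhds hx) ball_subset_closedBall
  have hvi : ∀ i : Fin 2, ContDiffOn ℝ 2 (fun y => v y i) (closedBall 0 R) := fun i =>
    ((EuclideanSpace.proj (𝕜 := ℝ) i).contDiff.comp_contDiffOn hv :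
      ContDiffOn ℝ 2 ((EuclideanSpace.proj (𝕜 := ℝ) i) ∘ v) (closedBall 0 R))
  have hviAt : ∀ (i : Fin 2), ∀ y ∈ ball (0:E2) R, ContDiffAt ℝ 2 (fun z => v z i) y :=
    fun i y hy => (hvi i).contDiffAt
      (mem_of_superset (isOpen_ball.mem_nhds hy) ball_subset_closedBall)
  have hvdAt : ∀ (i : Fin 2), ∀ y ∈ ball (0:E2) R, DifferentiableAt ℝ (fun z => v z i) y :=
    fun i y hy => (hviAt i y hy).differentiableAt (by norm_num)
  have hDvi : ∀ i : Fin 2, ContDiffOn ℝ 1 (fderiv ℝ (fun z => v z i)) (ball (0:E2) R) :=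
    fun i => ((hvi i).mono ball_subset_closedBall).fderiv_of_isOpen isOpen_ball (by norm_num)
  have hDvAt : ∀ (i : Fin 2), ∀ y ∈ ball (0:E2) R,
      DifferentiableAt ℝ (fderiv ℝ (fun z => v z i)) y := fun i y hy =>
    ((hDvi i).differentiableOn (by norm_num)).differentiableAt (isOpen_ball.mem_nhds hy)
  have hgAt : ∀ (i j : Fin 2), ∀ y ∈ ball (0:E2) R,
      HasFDerivAt (fun w => fderiv ℝ (fun z => v z i) w (e2 j))
      ((ContinuousLinearMap.apply ℝ ℝ (e2 j)).comp (fderiv ℝ (fderiv ℝ (fun z => v z i)) y)) y :=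
    fun i j y hy =>
      (ContinuousLinearMap.apply ℝ ℝ (e2 j)).hasFDerivAt.comp y (hDvAt i y hy).hasFDerivAt
  have hsymm : ∀ (i : Fin 2) (a b : E2), fderiv ℝ (fderiv ℝ (fun z => v z i)) x a b
      = fderiv ℝ (fderiv ℝ (fun z => v z i)) x b a := by
    intro i a b
    have hev : ∀ᶠ y in 𝓝 x, HasFDerivAt (fun z => v z i) (fderiv ℝ (fun z => v z i) y) y := by
      filter_upwards [isOpen_ball.mem_nhds hx] with y hy
      exact (hvdAt i y hy).hasFDerivAt
    exact second_derivative_symmetric_of_eventually hev (hDvAt i x hx).hasFDerivAt a b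
  -- the convective term functions
  set Q : Fin 2 → E2 → ℝ := fun i y => v y 0 * fderiv ℝ (fun z => v z i) y (e2 0)
      + v y 1 * fderiv ℝ (fun z => v z i) y (e2 1) with hQ
  have hmom : ∀ y ∈ ball (0:E2) R, ∀ i : Fin 2, Q i y = -(fderiv ℝ P y (e2 i)) := by
    intro y hy i
    simpa [hQ, pd, Fin.sum_univ_two] using momentum y hy i
  set L : E2 → (E2 →L[ℝ] ℝ) := fun y =>
    (-(Q 0 y)) • (EuclideanSpace.proj (𝕜 := ℝ) (0 : Fin 2))
      + (-(Q 1 y)) • (EuclideanSpace.proj (𝕜 := ℝ) (1 : Fin 2)) with hL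
  have hLval : ∀ (y : E2) (i : Fin 2), L y (e2 i) = -(Q i y) := by
    intro y i
    fin_cases i <;>
      simp [hL, e2, PiLp.proj_apply, EuclideanSpace.single_apply]
  have hPdAt : ∀ y ∈ ball (0:E2) R, HasFDerivAt P (L y) y := by
    intro y hy
    have hPd : DifferentiableAt ℝ P y :=
      (hP.contDiffAt (isOpen_ball.mem_nhds hy)).differentiableAt (by norm_num)
    have hfL : fderiv ℝ P y = L y := by
      symm
      apply clm_ext2 <;> rw [hLval] <;> [rw [hmom y hy 0]; rw [hmom y hy 1]] <;> simp
    exact hfL ▸ hPd.hasFDerivAt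
  have hQd : ∀ (i : Fin 2), ∀ y ∈ ball (0:E2) R, DifferentiableAt ℝ (Q i) y := by
    intro i y hy
    exact ((hvdAt 0 y hy).mul (hgAt i 0 y hy).differentiableAt).add
      ((hvdAt 1 y hy).mul (hgAt i 1 y hy).differentiableAt)
  have hLd : DifferentiableAt ℝ L x :=
    (((hQd 0 x hx).neg).smul_const _).add (((hQd 1 x hx).neg).smul_const _)
  have hLsym : fderiv ℝ L x (e2 0) (e2 1) = fderiv ℝ L x (e2 1) (e2 0) :=
    second_derivative_symmetric_of_eventually
      (Filter.eventually_of_mem (isOpen_ball.mem_nhds hx) hPdAt) hLd.hasFDerivAt (e2 0) (e2 1)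
  have hQcross : ∀ i k : Fin 2, fderiv ℝ L x (e2 k) (e2 i) = -(fderiv ℝ (Q i) x (e2 k)) := by
    intro i k
    have h1 : HasFDerivAt (fun y => L y (e2 i))
        ((ContinuousLinearMap.apply ℝ ℝ (e2 i)).comp (fderiv ℝ L x)) x :=
      (ContinuousLinearMap.apply ℝ ℝ (e2 i)).hasFDerivAt.comp x hLd.hasFDerivAt
    have h2 : (fun y => L y (e2 i)) = fun y => -(Q i y) := funext fun y => hLval y i
    rw [h2] at h1
    have h3 := h1.fderiv
    calc fderiv ℝ L x (e2 k) (e2 i)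
        = ((ContinuousLinearMap.apply ℝ ℝ (e2 i)).comp (fderiv ℝ L x)) (e2 k) := rfl
      _ = fderiv ℝ (fun y => -(Q i y)) x (e2 k) := by rw [h3]
      _ = -(fderiv ℝ (Q i) x (e2 k)) := by rw [fderiv_fun_neg]; rfl
  have hPP : fderiv ℝ (Q 1) x (e2 0) = fderiv ℝ (Q 0) x (e2 1) := by
    have := hLsym
    rw [hQcross 1 0, hQcross 0 1] at this
    linarith
  have hQder : ∀ i k : Fin 2, fderiv ℝ (Q i) x (e2 k)
      = fderiv ℝ (fun z => v z 0) x (e2 k) * fderiv ℝ (fun z => v z i) x (e2 0)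
      + v x 0 * fderiv ℝ (fderiv ℝ (fun z => v z i)) x (e2 k) (e2 0)
      + (fderiv ℝ (fun z => v z 1) x (e2 k) * fderiv ℝ (fun z => v z i) x (e2 1)
      + v x 1 * fderiv ℝ (fderiv ℝ (fun z => v z i)) x (e2 k) (e2 1)) := by
    intro i k
    have e0 : fderiv ℝ (Q i) x = fderiv ℝ (fun y => v y 0 * fderiv ℝ (fun z => v z i) y (e2 0)) x
        + fderiv ℝ (fun y => v y 1 * fderiv ℝ (fun z => v z i) y (e2 1)) x := by
      rw [hQ]
      exact fderiv_add ((hvdAt 0 x hx).mul (hgAt i 0 x hx).differentiableAt)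
        ((hvdAt 1 x hx).mul (hgAt i 1 x hx).differentiableAt)
    have e1 : fderiv ℝ (fun y => v y 0 * fderiv ℝ (fun z => v z i) y (e2 0)) x
        = v x 0 • fderiv ℝ (fun w => fderiv ℝ (fun z => v z i) w (e2 0)) x
          + fderiv ℝ (fun z => v z i) x (e2 0) • fderiv ℝ (fun z => v z 0) x :=
      fderiv_mul (hvdAt 0 x hx) (hgAt i 0 x hx).differentiableAt
    have e2' : fderiv ℝ (fun y => v y 1 * fderiv ℝ (fun z => v z i) y (e2 1)) x
        = v x 1 • fderiv ℝ (fun w => fderiv ℝ (fun z => v z i) w (e2 1)) x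
          + fderiv ℝ (fun z => v z i) x (e2 1) • fderiv ℝ (fun z => v z 1) x :=
      fderiv_mul (hvdAt 1 x hx) (hgAt i 1 x hx).differentiableAt
    rw [e0, e1, e2', (hgAt i 0 x hx).fderiv, (hgAt i 1 x hx).fderiv]
    simp [ContinuousLinearMap.add_apply, ContinuousLinearMap.smul_apply,
      ContinuousLinearMap.comp_apply, ContinuousLinearMap.apply_apply, smul_eq_mul]
    ring
  -- identification of the vorticity with the curl of v on the open ball
  have hωeq : ∀ y ∈ ball (0:E2) R, lapW (closedBall 0 R) u y
      = fderiv ℝ (fun z => v z 1) y (e2 0) - fderiv ℝ (fun z => v z 0) y (e2 1) := by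
    intro y hy
    have hsy : closedBall (0:E2) R ∈ 𝓝 y :=
      mem_of_superset (isOpen_ball.mem_nhds hy) ball_subset_closedBall
    have hys : y ∈ closedBall (0:E2) R := ball_subset_closedBall hy
    have h1 : fderivWithin ℝ (pdW (closedBall 0 R) 0 u) (closedBall 0 R) y
        = fderiv ℝ (fun z => v z 1) y := by
      rw [fderivWithin_congr (fun z hz => (hstream z hz).1) ((hstream y hys).1),
        fderivWithin_of_mem_nhds hsy]
    have h2 : fderivWithin ℝ (pdW (closedBall 0 R) 1 u) (closedBall 0 R) y
        = fderiv ℝ (fun z => -(v z 0)) y := by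
      rw [fderivWithin_congr (fun z hz => (hstream z hz).2) ((hstream y hys).2),
        fderivWithin_of_mem_nhds hsy]
    have h3 : fderiv ℝ (fun z => -(v z 0)) y = -(fderiv ℝ (fun z => v z 0) y) := fderiv_neg
    rw [show lapW (closedBall 0 R) u y
        = fderivWithin ℝ (pdW (closedBall 0 R) 0 u) (closedBall 0 R) y (e2 0)
        + fderivWithin ℝ (pdW (closedBall 0 R) 1 u) (closedBall 0 R) y (e2 1) from by
      simp only [lapW, Fin.sum_univ_two]; rfl]
    rw [h1, h2, h3]
    simp [sub_eq_add_neg]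
  have hDωx : fderivWithin ℝ (lapW (closedBall 0 R) u) (closedBall 0 R) x
      = fderiv ℝ (fun y => fderiv ℝ (fun z => v z 1) y (e2 0)
          - fderiv ℝ (fun z => v z 0) y (e2 1)) x := by
    rw [fderivWithin_of_mem_nhds hsx]
    apply Filter.EventuallyEq.fderiv_eq
    filter_upwards [isOpen_ball.mem_nhds hx] with y hy using hωeq y hy
  have hωd : ∀ k : Fin 2, fderiv ℝ (fun y => fderiv ℝ (fun z => v z 1) y (e2 0)
      - fderiv ℝ (fun z => v z 0) y (e2 1)) x (e2 k)
      = fderiv ℝ (fderiv ℝ (fun z => v z 1)) x (e2 k) (e2 0)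
        - fderiv ℝ (fderiv ℝ (fun z => v z 0)) x (e2 k) (e2 1) := by
    intro k
    rw [fderiv_fun_sub (hgAt 1 0 x hx).differentiableAt (hgAt 0 1 x hx).differentiableAt]
    rw [ContinuousLinearMap.sub_apply, (hgAt 1 0 x hx).fderiv, (hgAt 0 1 x hx).fderiv]
    rfl
  rw [hDωx, clm_decomp]
  rw [hωd 0, hωd 1]
  have hinc : fderiv ℝ (fun z => v z 0) x (e2 0) + fderiv ℝ (fun z => v z 1) x (e2 1) = 0 := by
    simpa [Fin.sum_univ_two] using incomp x hx
  have hPP' := hPP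
  rw [hQder 1 0, hQder 0 1] at hPP'
  have hs0 := hsymm 0 (e2 0) (e2 1)
  have hs1 := hsymm 1 (e2 0) (e2 1)
  simp only [smul_eq_mul]
  linear_combination hPP' - v x 0 * hs0 - v x 1 * hs1
    + (fderiv ℝ (fun z => v z 0) x (e2 1) - fderiv ℝ (fun z => v z 1) x (e2 0)) * hinc

/-- circle parametrization -/
def circ (R θ : ℝ) : E2 := (R * Real.cos θ) • e2 0 + (R * Real.sin θ) • e2 1
/-- rotation by π/2 -/
def rot (x : E2) : E2 := (-(x 1)) • e2 0 + (x 0) • e2 1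

lemma e2_app (i j : Fin 2) : e2 i j = if j = i then 1 else 0 := EuclideanSpace.single_apply i 1 j

lemma circ_app0 (R θ : ℝ) : circ R θ 0 = R * Real.cos θ := by
  simp [circ, e2_app, PiLp.add_apply, PiLp.smul_apply]
lemma circ_app1 (R θ : ℝ) : circ R θ 1 = R * Real.sin θ := by
  simp [circ, e2_app, PiLp.add_apply, PiLp.smul_apply]
lemma rot_app0 (x : E2) : rot x 0 = -(x 1) := by
  simp [rot, e2_app, PiLp.add_apply, PiLp.smul_apply]
lemma rot_app1 (x : E2) : rot x 1 = x 0 := by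
  simp [rot, e2_app, PiLp.add_apply, PiLp.smul_apply]

lemma norm_sq_E2 (x : E2) : ‖x‖^2 = x 0 ^ 2 + x 1 ^ 2 := by
  rw [EuclideanSpace.norm_eq]
  rw [Real.sq_sqrt (by positivity)]
  simp [Fin.sum_univ_two, sq_abs]

lemma norm_circ (R θ : ℝ) (hR : 0 ≤ R) : ‖circ R θ‖ = R := by
  have h := norm_sq_E2 (circ R θ)
  rw [circ_app0, circ_app1] at h
  have : ‖circ R θ‖^2 = R^2 := by rw [h]; ring_nf; rw [mul_comm]; nlinarith [sin_sq_add_cos_sq θ]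
  nlinarith [norm_nonneg (circ R θ)]

lemma circ_surj (R : ℝ) (hR : 0 < R) (x : E2) (hx : ‖x‖ = R) : ∃ θ, circ R θ = x := by
  set c : ℂ := ⟨x 0, x 1⟩ with hc
  have habs : ‖c‖ = R := by
    have : ‖c‖ = Real.sqrt ((x 0)^2 + (x 1)^2) := by
      rw [Complex.norm_def, Complex.normSq_apply]; norm_num [hc]; ring_nf
    rw [this, ← norm_sq_E2 x, Real.sqrt_sq (norm_nonneg x), hx]
  have hc0 : c ≠ 0 := by
    intro h; rw [h] at habs; simp at habs; exact (ne_of_gt hR) habs.symm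
  refine ⟨Complex.arg c, ?_⟩
  have h0 : Real.cos (Complex.arg c) = x 0 / R := by
    rw [Complex.cos_arg hc0, habs]
  have h1 : Real.sin (Complex.arg c) = x 1 / R := by
    rw [Complex.sin_arg, habs]
  have e0 : circ R (Complex.arg c) 0 = x 0 := by
    rw [circ_app0, h0]; field_simp
  have e1 : circ R (Complex.arg c) 1 = x 1 := by
    rw [circ_app1, h1]; field_simp
  ext j
  fin_cases j
  · exact e0
  · exact e1

lemma hasDerivAt_circ (R θ : ℝ) : HasDerivAt (circ R) (rot (circ R θ)) θ := by
  have h0 : HasDerivAt (fun t => (R * Real.cos t) • e2 0) ((-(R * Real.sin θ)) • e2 0) θ := by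
    have := ((Real.hasDerivAt_cos θ).const_mul R).smul_const (e2 0)
    simpa [mul_comm, mul_neg] using this
  have h1 : HasDerivAt (fun t => (R * Real.sin t) • e2 1) ((R * Real.cos θ) • e2 1) θ := by
    exact ((Real.hasDerivAt_sin θ).const_mul R).smul_const (e2 1)
  have := h0.add h1
  have hr : rot (circ R θ) = (-(R * Real.sin θ)) • e2 0 + (R * Real.cos θ) • e2 1 := by
    rw [rot, circ_app0, circ_app1]
  rw [hr]
  exact this

lemma continuous_circ (R : ℝ) : Continuous (circ R) := by
  unfold circ; fun_prop

lemma circ_mem_closedBall (R θ : ℝ) (hR : 0 ≤ R) : circ R θ ∈ closedBall (0:E2) R := by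
  rw [mem_closedBall, dist_zero_right, norm_circ R θ hR]

lemma hUD (R : ℝ) (hR : 0 < R) : UniqueDiffOn ℝ (closedBall (0:E2) R) :=
  uniqueDiffOn_convex (convex_closedBall _ _)
    (by rw [interior_closedBall _ (ne_of_gt hR)]; exact ⟨0, mem_ball_self hR⟩)

lemma omega_c1 (R : ℝ) (hR : 0 < R) (u : E2 → ℝ) (hu : ContDiffOn ℝ 3 u (closedBall 0 R)) :
    ContDiffOn ℝ 1 (lapW (closedBall 0 R) u) (closedBall 0 R) := by
  have huniq := hUD R hR
  have h1 : ∀ i : Fin 2, ContDiffOn ℝ 2 (pdW (closedBall 0 R) i u) (closedBall 0 R) := by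
    intro i
    exact (hu.fderivWithin huniq (by norm_num)).clm_apply contDiffOn_const
  have h2 : ∀ i : Fin 2, ContDiffOn ℝ 1 (pdW (closedBall 0 R) i (pdW (closedBall 0 R) i u))
      (closedBall 0 R) := by
    intro i
    exact ((h1 i).fderivWithin huniq (by norm_num)).clm_apply contDiffOn_const
  have : lapW (closedBall 0 R) u = fun x => pdW (closedBall 0 R) 0 (pdW (closedBall 0 R) 0 u) x
      + pdW (closedBall 0 R) 1 (pdW (closedBall 0 R) 1 u) x := by
    funext x; simp [lapW, Fin.sum_univ_two]
  rw [this]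
  exact (h2 0).add (h2 1)

lemma omega_fderiv_cont (R : ℝ) (hR : 0 < R) (u : E2 → ℝ)
    (hu : ContDiffOn ℝ 3 u (closedBall 0 R)) :
    ContinuousOn (fderivWithin ℝ (lapW (closedBall 0 R) u) (closedBall 0 R))
      (closedBall 0 R) :=
  (omega_c1 R hR u hu).continuousOn_fderivWithin (hUD R hR) le_rfl

/-- `F = 0` on the closed ball by density. -/
lemma F_zero_closed (R : ℝ) (hR : 0 < R) (v : E2 → E2) (u : E2 → ℝ)
    (hv : ContDiffOn ℝ 2 v (closedBall 0 R))
    (hu : ContDiffOn ℝ 3 u (closedBall 0 R))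
    (hF : ∀ y ∈ ball (0:E2) R,
      fderivWithin ℝ (lapW (closedBall 0 R) u) (closedBall 0 R) y (v y) = 0)
    (x : E2) (hx : x ∈ closedBall (0:E2) R) :
    fderivWithin ℝ (lapW (closedBall 0 R) u) (closedBall 0 R) x (v x) = 0 := by
  set F : E2 → ℝ := fun y =>
    fderivWithin ℝ (lapW (closedBall 0 R) u) (closedBall 0 R) y (v y) with hFdef
  have hcont : ContinuousOn F (closedBall 0 R) :=
    (omega_fderiv_cont R hR u hu).clm_apply hv.continuousOn
  have hxcl : x ∈ closure (ball (0:E2) R) := by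
    rw [closure_ball 0 (ne_of_gt hR)]; exact hx
  have hne : (𝓝[ball (0:E2) R] x).NeBot := mem_closure_iff_nhdsWithin_neBot.mp hxcl
  have h1 : Tendsto F (𝓝[ball (0:E2) R] x) (𝓝 (F x)) :=
    ((hcont x hx).mono ball_subset_closedBall).tendsto
  have h2 : Tendsto F (𝓝[ball (0:E2) R] x) (𝓝 0) := by
    refine Tendsto.congr' ?_ tendsto_const_nhds
    exact eventually_of_mem self_mem_nhdsWithin (fun y hy => (hF y hy).symm)
  exact tendsto_nhds_unique h1 h2

/-- chain rule along the circle -/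
lemma hasDerivAt_comp_circ (R : ℝ) (hR : 0 < R) (f : E2 → ℝ) (θ : ℝ)
    (hf : DifferentiableWithinAt ℝ f (closedBall 0 R) (circ R θ)) :
    HasDerivAt (fun t => f (circ R t))
      (fderivWithin ℝ f (closedBall 0 R) (circ R θ) (rot (circ R θ))) θ := by
  have hmaps : MapsTo (circ R) univ (closedBall (0:E2) R) :=
    fun t _ => circ_mem_closedBall R t (le_of_lt hR)
  have h := hf.hasFDerivWithinAt.comp_hasDerivWithinAt θ
    ((hasDerivAt_circ R θ).hasDerivWithinAt (s := univ)) hmaps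
  rw [hasDerivWithinAt_univ] at h
  exact h

lemma E2_ext (a b : E2) (h0 : a 0 = b 0) (h1 : a 1 = b 1) : a = b := by
  ext j; fin_cases j; exacts [h0, h1]

lemma partTang (R : ℝ) (hR : 0 < R) (v : E2 → E2) (u : E2 → ℝ)
    (hv : ContDiffOn ℝ 2 v (closedBall 0 R))
    (hu : ContDiffOn ℝ 3 u (closedBall 0 R))
    (hF : ∀ y ∈ ball (0:E2) R,
      fderivWithin ℝ (lapW (closedBall 0 R) u) (closedBall 0 R) y (v y) = 0)
    (tangency : ∀ x : E2, ‖x‖ = R → ∑ i, v x i * x i = 0)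
    (θ : ℝ) (hvne : v (circ R θ) ≠ 0) :
    fderivWithin ℝ (lapW (closedBall 0 R) u) (closedBall 0 R) (circ R θ)
      (rot (circ R θ)) = 0 := by
  set x := circ R θ with hxdef
  have hxn : ‖x‖ = R := norm_circ R θ (le_of_lt hR)
  have hperp : v x 0 * x 0 + v x 1 * x 1 = 0 := by
    simpa [Fin.sum_univ_two] using tangency x hxn
  have hsq : x 0 ^ 2 + x 1 ^ 2 = R ^ 2 := by rw [← norm_sq_E2 x, hxn]
  obtain ⟨c, hc, hcne⟩ : ∃ c : ℝ, v x = c • rot x ∧ c ≠ 0 := by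
    by_cases h0 : x 0 = 0
    · have h1 : x 1 ≠ 0 := by intro h; rw [h0, h] at hsq; nlinarith
      have hv1 : v x 1 = 0 := by
        rw [h0, mul_zero, zero_add] at hperp
        exact (mul_eq_zero.mp hperp).resolve_right h1
      refine ⟨-(v x 0) / x 1, ?_, ?_⟩
      · refine E2_ext _ _ ?_ ?_
        · rw [PiLp.smul_apply, rot_app0, smul_eq_mul]; field_simp
        · rw [PiLp.smul_apply, rot_app1, smul_eq_mul, h0, mul_zero, hv1]
      · intro h
        apply hvne
        have hv0 : v x 0 = 0 := by
          field_simp at h; simpa using h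
        exact E2_ext _ _ (by simpa using hv0) (by simpa using hv1)
    · refine ⟨v x 1 / x 0, ?_, ?_⟩
      · refine E2_ext _ _ ?_ ?_
        · rw [PiLp.smul_apply, rot_app0, smul_eq_mul]
          field_simp; linear_combination hperp
        · rw [PiLp.smul_apply, rot_app1, smul_eq_mul]; field_simp
      · intro h
        apply hvne
        have hv1 : v x 1 = 0 := by field_simp at h; simpa using h
        have hv0 : v x 0 = 0 := by
          rw [hv1, zero_mul, add_zero] at hperp
          exact (mul_eq_zero.mp hperp).resolve_right h0
        exact E2_ext _ _ (by simpa using hv0) (by simpa using hv1)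
  have hxmem : x ∈ closedBall (0:E2) R := circ_mem_closedBall R θ (le_of_lt hR)
  have hFx := F_zero_closed R hR v u hv hu hF x hxmem
  rw [hc, map_smul, smul_eq_mul] at hFx
  exact (mul_eq_zero.mp hFx).resolve_left hcne

lemma partB (R : ℝ) (hR : 0 < R) (v : E2 → E2) (u : E2 → ℝ)
    (hv : ContDiffOn ℝ 2 v (closedBall 0 R))
    (hu : ContDiffOn ℝ 3 u (closedBall 0 R))
    (hstream : ∀ x ∈ closedBall (0:E2) R,
      pdW (closedBall 0 R) 0 u x = v x 1 ∧ pdW (closedBall 0 R) 1 u x = -(v x 0))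
    (hF : ∀ y ∈ ball (0:E2) R,
      fderivWithin ℝ (lapW (closedBall 0 R) u) (closedBall 0 R) y (v y) = 0)
    (θ₀ ε : ℝ) (hε : 0 < ε)
    (hvzero : ∀ θ ∈ Metric.ball θ₀ ε, v (circ R θ) = 0) :
    lapW (closedBall 0 R) u (circ R θ₀)
      * fderivWithin ℝ (lapW (closedBall 0 R) u) (closedBall 0 R) (circ R θ₀)
          (rot (circ R θ₀)) = 0 := by
  have huniq := hUD R hR
  set x := circ R θ₀ with hxdef
  have hxn : ‖x‖ = R := norm_circ R θ₀ (le_of_lt hR)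
  have hxmem : x ∈ closedBall (0:E2) R := circ_mem_closedBall R θ₀ (le_of_lt hR)
  have hux : UniqueDiffWithinAt ℝ (closedBall (0:E2) R) x := huniq x hxmem
  have hxclint : x ∈ closure (interior (closedBall (0:E2) R)) := by
    rw [interior_closedBall _ (ne_of_gt hR), closure_ball _ (ne_of_gt hR)]; exact hxmem
  -- second derivative of u within the closed ball
  set D2 : E2 →L[ℝ] (E2 →L[ℝ] ℝ) :=
    fderivWithin ℝ (fderivWithin ℝ u (closedBall 0 R)) (closedBall 0 R) x with hD2def
  have hduC2 : ContDiffOn ℝ 2 (fderivWithin ℝ u (closedBall 0 R)) (closedBall 0 R) :=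
    hu.fderivWithin huniq (by norm_num)
  have hD2diff : DifferentiableWithinAt ℝ (fderivWithin ℝ u (closedBall 0 R))
      (closedBall 0 R) x := (hduC2.differentiableOn (by norm_num)) x hxmem
  have hBi : ∀ i : Fin 2, fderivWithin ℝ (pdW (closedBall 0 R) i u) (closedBall 0 R) x
      = (ContinuousLinearMap.apply ℝ ℝ (e2 i)).comp D2 := by
    intro i
    have h := (ContinuousLinearMap.apply ℝ ℝ (e2 i)).hasFDerivAt.comp_hasFDerivWithinAt x
      hD2diff.hasFDerivWithinAt
    exact h.fderivWithin hux
  have hsymu : fderivWithin ℝ (fderivWithin ℝ u (closedBall 0 R)) (closedBall 0 R) x (e2 0) (e2 1)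
      = fderivWithin ℝ (fderivWithin ℝ u (closedBall 0 R)) (closedBall 0 R) x (e2 1) (e2 0) :=
    (hu.contDiffWithinAt hxmem).isSymmSndFDerivWithinAt (by norm_num) huniq hxclint hxmem
      (e2 0) (e2 1)
  have hsym : D2 (e2 0) (e2 1) = D2 (e2 1) (e2 0) := hsymu
  -- the within-Hessian annihilates the tangent direction
  have hpdWC2 : ∀ i : Fin 2, ContDiffOn ℝ 2 (pdW (closedBall 0 R) i u) (closedBall 0 R) :=
    fun i => hduC2.clm_apply contDiffOn_const
  have htan : ∀ i : Fin 2, D2 (rot x) (e2 i) = 0 := by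
    intro i
    have hdiff : DifferentiableWithinAt ℝ (pdW (closedBall 0 R) i u) (closedBall 0 R) x :=
      ((hpdWC2 i).differentiableOn (by norm_num)) x hxmem
    have h1 := hasDerivAt_comp_circ R hR (pdW (closedBall 0 R) i u) θ₀ hdiff
    have hzero : ∀ θ ∈ Metric.ball θ₀ ε, pdW (closedBall 0 R) i u (circ R θ) = 0 := by
      intro θ hθ
      have hmem := circ_mem_closedBall R θ (le_of_lt hR)
      have hst := hstream (circ R θ) hmem
      have hvz := hvzero θ hθ
      fin_cases i
      · show pdW (closedBall 0 R) 0 u (circ R θ) = 0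
        rw [hst.1, hvz]; simp
      · show pdW (closedBall 0 R) 1 u (circ R θ) = 0
        rw [hst.2, hvz]; simp
    have hev : (fun t => pdW (closedBall 0 R) i u (circ R t)) =ᶠ[𝓝 θ₀] fun _ => (0:ℝ) :=
      eventually_of_mem (Metric.ball_mem_nhds θ₀ hε) hzero
    have h2 : HasDerivAt (fun _ : ℝ => (0:ℝ))
        (fderivWithin ℝ (pdW (closedBall 0 R) i u) (closedBall 0 R) x (rot x)) θ₀ :=
      h1.congr_of_eventuallyEq hev.symm
    have h3 : fderivWithin ℝ (pdW (closedBall 0 R) i u) (closedBall 0 R) x (rot x) = 0 :=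
      h2.unique (hasDerivAt_const θ₀ 0)
    rw [hBi i] at h3
    exact h3
  -- numeric Hessian entries
  have hm : ∀ i : Fin 2, -(x 1) * D2 (e2 0) (e2 i) + x 0 * D2 (e2 1) (e2 i) = 0 := by
    intro i
    have := htan i
    rw [show rot x = (-(x 1)) • e2 0 + (x 0) • e2 1 from rfl] at this
    rw [map_add, map_smul, map_smul] at this
    simpa [smul_eq_mul] using this
  -- the vorticity at x
  have hω : lapW (closedBall 0 R) u x = D2 (e2 0) (e2 0) + D2 (e2 1) (e2 1) := by
    have h0 : pdW (closedBall 0 R) 0 (pdW (closedBall 0 R) 0 u) x = D2 (e2 0) (e2 0) := by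
      show fderivWithin ℝ (pdW (closedBall 0 R) 0 u) (closedBall 0 R) x (e2 0) = _
      rw [hBi 0]; rfl
    have h1 : pdW (closedBall 0 R) 1 (pdW (closedBall 0 R) 1 u) x = D2 (e2 1) (e2 1) := by
      show fderivWithin ℝ (pdW (closedBall 0 R) 1 u) (closedBall 0 R) x (e2 1) = _
      rw [hBi 1]; rfl
    rw [show lapW (closedBall 0 R) u x = pdW (closedBall 0 R) 0 (pdW (closedBall 0 R) 0 u) x
      + pdW (closedBall 0 R) 1 (pdW (closedBall 0 R) 1 u) x from by
        simp [lapW, Fin.sum_univ_two], h0, h1]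
  -- derivative of v within the closed ball at x
  set A : E2 →L[ℝ] E2 := fderivWithin ℝ v (closedBall 0 R) x with hAdef
  have hA : HasFDerivWithinAt v A (closedBall 0 R) x :=
    ((hv.differentiableOn (by norm_num)) x hxmem).hasFDerivWithinAt
  have hA1 : ∀ w : E2, A w 1 = D2 w (e2 0) := by
    intro w
    have h := (EuclideanSpace.proj (𝕜 := ℝ) (1 : Fin 2)).hasFDerivAt.comp_hasFDerivWithinAt x hA
    have h2 : fderivWithin ℝ (fun y => v y 1) (closedBall 0 R) x
        = (EuclideanSpace.proj (𝕜 := ℝ) (1 : Fin 2)).comp A := h.fderivWithin hux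
    have h3 : fderivWithin ℝ (pdW (closedBall 0 R) 0 u) (closedBall 0 R) x
        = fderivWithin ℝ (fun y => v y 1) (closedBall 0 R) x :=
      fderivWithin_congr (fun z hz => (hstream z hz).1) ((hstream x hxmem).1)
    have h4 := h3.symm.trans (hBi 0)
    rw [h2] at h4
    have h7 := congrArg (fun (L : E2 →L[ℝ] ℝ) => L w) h4
    simpa using h7
  have hA0 : ∀ w : E2, A w 0 = -(D2 w (e2 1)) := by
    intro w
    have h := (EuclideanSpace.proj (𝕜 := ℝ) (0 : Fin 2)).hasFDerivAt.comp_hasFDerivWithinAt x hA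
    have h2 : fderivWithin ℝ (fun y => v y 0) (closedBall 0 R) x
        = (EuclideanSpace.proj (𝕜 := ℝ) (0 : Fin 2)).comp A := h.fderivWithin hux
    have h3 : fderivWithin ℝ (fun y => -(pdW (closedBall 0 R) 1 u y)) (closedBall 0 R) x
        = fderivWithin ℝ (fun y => v y 0) (closedBall 0 R) x :=
      fderivWithin_congr (fun z hz => by rw [(hstream z hz).2, neg_neg])
        (by rw [(hstream x hxmem).2, neg_neg])
    have h5 : fderivWithin ℝ (fun y => -(pdW (closedBall 0 R) 1 u y)) (closedBall 0 R) x
        = -(fderivWithin ℝ (pdW (closedBall 0 R) 1 u) (closedBall 0 R) x) :=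
      fderivWithin_neg hux
    have h6 := (h5.symm.trans h3).trans h2
    -- h6 : -(fderivWithin (pdW 1 u)) = proj0.comp A
    have h7 := congrArg (fun (L : E2 →L[ℝ] ℝ) => L w) h6
    simp only [ContinuousLinearMap.neg_apply, ContinuousLinearMap.comp_apply] at h7
    rw [hBi 1] at h7
    simpa using h7.symm
  -- A x = ω • rot x
  have hAx : A x = (lapW (closedBall 0 R) u x) • rot x := by
    have hD2x : ∀ i : Fin 2, D2 x (e2 i) = x 0 * D2 (e2 0) (e2 i) + x 1 * D2 (e2 1) (e2 i) := by
      intro i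
      conv_lhs => rw [clm_decomp D2 x]
      simp [smul_eq_mul]
    refine E2_ext _ _ ?_ ?_
    · rw [hA0 x, PiLp.smul_apply, rot_app0, smul_eq_mul, hω, hD2x 1]
      have h0 := hm 0
      linear_combination -h0 - x 0 * hsym
    · rw [hA1 x, PiLp.smul_apply, rot_app1, smul_eq_mul, hω, hD2x 0]
      have h1 := hm 1
      linear_combination -h1 - (x 1) * hsym
  -- limit along the inward radial segment
  set c : ℝ → E2 := fun t => (1 - t) • x with hcdef
  have hc0 : c 0 = x := by rw [hcdef]; simp
  have hvx : v x = 0 := hvzero θ₀ (mem_ball_self hε)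
  have hcd : HasDerivAt c (-x) 0 := by
    have h := ((hasDerivAt_id (0:ℝ)).const_sub 1).smul_const x
    simpa using h
  have hmapsTo : MapsTo c (Icc (0:ℝ) 1) (closedBall (0:E2) R) := by
    intro t ht
    rw [mem_closedBall, dist_zero_right, hcdef]
    rw [norm_smul, Real.norm_eq_abs, hxn, abs_of_nonneg (by linarith [ht.2])]
    nlinarith [ht.1, ht.2, hR]
  have hccl : HasFDerivWithinAt v A (closedBall 0 R) (c 0) := by rw [hc0]; exact hA
  have hvc : HasDerivWithinAt (fun t => v (c t)) (A (-x)) (Icc (0:ℝ) 1) 0 :=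
    hccl.comp_hasDerivWithinAt 0 (hcd.hasDerivWithinAt) hmapsTo
  have hslope := hasDerivWithinAt_iff_tendsto_slope.mp hvc
  have hsub : 𝓝[Ioo (0:ℝ) 1] 0 ≤ 𝓝[Icc (0:ℝ) 1 \ {0}] 0 :=
    nhdsWithin_mono 0 (fun t ht => ⟨Ioo_subset_Icc_self ht, ne_of_gt ht.1⟩)
  have hne : (𝓝[Ioo (0:ℝ) 1] (0:ℝ)).NeBot := by
    rw [nhdsWithin_Ioo_eq_nhdsGT one_pos]
    infer_instance
  have hT2 : Tendsto (fun t : ℝ => t⁻¹ • v (c t)) (𝓝[Ioo (0:ℝ) 1] 0) (𝓝 (A (-x))) := by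
    have h := hslope.mono_left hsub
    refine h.congr (fun t => ?_)
    rw [slope_def_module, hc0, hvx, sub_zero, sub_zero]
  have hT1 : Tendsto c (𝓝[Ioo (0:ℝ) 1] 0) (𝓝[closedBall (0:E2) R] x) := by
    rw [tendsto_nhdsWithin_iff]
    constructor
    · have hcont : Continuous c := by rw [hcdef]; fun_prop
      have := hcont.tendsto 0
      rw [hc0] at this
      exact this.mono_left nhdsWithin_le_nhds
    · exact eventually_of_mem self_mem_nhdsWithin
        (fun t ht => hmapsTo (Ioo_subset_Icc_self ht))
  have hT3 : Tendsto (fun t => fderivWithin ℝ (lapW (closedBall 0 R) u) (closedBall 0 R) (c t))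
      (𝓝[Ioo (0:ℝ) 1] 0)
      (𝓝 (fderivWithin ℝ (lapW (closedBall 0 R) u) (closedBall 0 R) x)) :=
    ((omega_fderiv_cont R hR u hu) x hxmem).tendsto.comp hT1
  have happly : Continuous (fun p : (E2 →L[ℝ] ℝ) × E2 => p.1 p.2) :=
    isBoundedBilinearMap_apply.continuous
  have hT4 : Tendsto (fun t => fderivWithin ℝ (lapW (closedBall 0 R) u) (closedBall 0 R) (c t)
      (t⁻¹ • v (c t))) (𝓝[Ioo (0:ℝ) 1] 0)
      (𝓝 (fderivWithin ℝ (lapW (closedBall 0 R) u) (closedBall 0 R) x (A (-x)))) := by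
    have := (happly.tendsto ((fderivWithin ℝ (lapW (closedBall 0 R) u) (closedBall 0 R) x),
        A (-x))).comp (hT3.prodMk_nhds hT2)
    exact this
  have hzero : ∀ᶠ t in 𝓝[Ioo (0:ℝ) 1] (0:ℝ),
      fderivWithin ℝ (lapW (closedBall 0 R) u) (closedBall 0 R) (c t) (t⁻¹ • v (c t)) = 0 := by
    refine eventually_of_mem self_mem_nhdsWithin (fun t ht => ?_)
    have hcball : c t ∈ ball (0:E2) R := by
      rw [mem_ball, dist_zero_right, hcdef]
      rw [norm_smul, Real.norm_eq_abs, hxn, abs_of_nonneg (by linarith [ht.2.le])]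
      nlinarith [ht.1, ht.2, hR]
    rw [map_smul, smul_eq_mul, hF (c t) hcball, mul_zero]
  have hlim0 : Tendsto (fun t => fderivWithin ℝ (lapW (closedBall 0 R) u) (closedBall 0 R) (c t)
      (t⁻¹ • v (c t))) (𝓝[Ioo (0:ℝ) 1] 0) (𝓝 0) :=
    Tendsto.congr' (by filter_upwards [hzero] with t ht using ht.symm) tendsto_const_nhds
  have hkey : fderivWithin ℝ (lapW (closedBall 0 R) u) (closedBall 0 R) x (A (-x)) = 0 :=
    tendsto_nhds_unique hT4 hlim0
  rw [map_neg, hAx, map_neg, map_smul, smul_eq_mul, neg_eq_zero] at hkey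
  exact hkey

end Helpers

set_option maxHeartbeats 1000000 in
/-- For a steady Euler flow `v ∈ C²(cl D)` in the disk `D = B(0,R)`, tangential on `∂D`, with a
unique stagnation point `z ∈ D`, and stream function `u ∈ C³(cl D)` normalized by `u = 0` on `∂D`
and `0 < u < u(z)` in `D \ {z}`, the vorticity `Δu` is constant on the boundary circle `∂D`. -/
theorem vorticity_constant_on_boundary
    (R : ℝ) (hR : 0 < R)
    (v : E2 → E2) (P : E2 → ℝ)
    (hv : ContDiffOn ℝ 2 v (closure (ball (0 : E2) R)))
    (hP : ContDiffOn ℝ 1 P (ball (0 : E2) R))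
    -- momentum equation (v·∇)v = -∇P in D, componentwise
    (momentum : ∀ x ∈ ball (0 : E2) R, ∀ i : Fin 2,
      ∑ j, v x j * fderiv ℝ (fun y => v y i) x (e2 j) = - pd i P x)
    -- incompressibility div v = 0 in D
    (incomp : ∀ x ∈ ball (0 : E2) R,
      ∑ i, fderiv ℝ (fun y => v y i) x (e2 i) = 0)
    -- tangency v·n = 0 on ∂D
    (tangency : ∀ x : E2, ‖x‖ = R → ∑ i, v x i * x i = 0)
    -- z is the only stagnation point of v in D
    (z : E2) (hz : z ∈ ball (0 : E2) R) (hvz : v z = 0)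
    (hstag : ∀ x ∈ ball (0 : E2) R, x ≠ z → v x ≠ 0)
    -- u is a stream function of v, of class C³ up to the boundary
    (u : E2 → ℝ) (hu : ContDiffOn ℝ 3 u (closure (ball (0 : E2) R)))
    (hstream : ∀ x ∈ closure (ball (0 : E2) R),
      pdW (closure (ball (0 : E2) R)) 0 u x = v x 1 ∧
      pdW (closure (ball (0 : E2) R)) 1 u x = -(v x 0))
    -- normalization: u = 0 on ∂D and 0 < u < u(z) in D \ {z}
    (hu_bd : ∀ x : E2, ‖x‖ = R → u x = 0)
    (hu_pos : ∀ x ∈ ball (0 : E2) R, x ≠ z → 0 < u x ∧ u x < u z) :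
    ∃ d : ℝ, ∀ x : E2, ‖x‖ = R → lapW (closure (ball (0 : E2) R)) u x = d := by
  have hcl : closure (ball (0:E2) R) = closedBall 0 R := closure_ball 0 (ne_of_gt hR)
  rw [hcl] at hv hu hstream ⊢
  have hF : ∀ y ∈ ball (0:E2) R,
      fderivWithin ℝ (lapW (closedBall 0 R) u) (closedBall 0 R) y (v y) = 0 :=
    fun y hy => partA R v P u hv hP momentum incomp hstream y hy
  set g : ℝ → ℝ := fun θ => lapW (closedBall 0 R) u (circ R θ) with hgdef
  set g' : ℝ → ℝ := fun θ => fderivWithin ℝ (lapW (closedBall 0 R) u) (closedBall 0 R)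
    (circ R θ) (rot (circ R θ)) with hg'def
  have hωdiff : ∀ θ : ℝ, DifferentiableWithinAt ℝ (lapW (closedBall 0 R) u)
      (closedBall 0 R) (circ R θ) := fun θ =>
    ((omega_c1 R hR u hu).differentiableOn (by norm_num)) _ (circ_mem_closedBall R θ hR.le)
  have hg : ∀ θ, HasDerivAt g (g' θ) θ := fun θ =>
    hasDerivAt_comp_circ R hR (lapW (closedBall 0 R) u) θ (hωdiff θ)
  have hg'cont : Continuous g' := by
    have h1 : Continuous (fun θ => fderivWithin ℝ (lapW (closedBall 0 R) u)
        (closedBall 0 R) (circ R θ)) :=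
      (omega_fderiv_cont R hR u hu).comp_continuous (continuous_circ R)
        (fun θ => circ_mem_closedBall R θ hR.le)
    have h2 : Continuous (fun θ => rot (circ R θ)) := by
      have he : (fun θ => rot (circ R θ))
          = fun θ => (-(R * Real.sin θ)) • e2 0 + (R * Real.cos θ) • e2 1 := by
        funext θ
        simp only [rot, circ_app0, circ_app1]
      rw [he]; fun_prop
    exact (isBoundedBilinearMap_apply.continuous).comp (h1.prodMk h2)
  have htang : ∀ θ, v (circ R θ) ≠ 0 → g' θ = 0 := fun θ h =>
    partTang R hR v u hv hu hF tangency θ h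
  have hzero : ∀ θ, g' θ = 0 := by
    by_contra hcon
    push_neg at hcon
    obtain ⟨θ₀, hθ₀⟩ := hcon
    have hUopen : IsOpen {θ : ℝ | g' θ ≠ 0} := isOpen_compl_singleton.preimage hg'cont
    obtain ⟨ε, hε, hball⟩ := Metric.isOpen_iff.mp hUopen θ₀ hθ₀
    have hvzz : ∀ θ ∈ Metric.ball θ₀ ε, v (circ R θ) = 0 := by
      intro θ hθ
      by_contra hne
      exact (hball hθ) (htang θ hne)
    have hgz : ∀ θ₁ ∈ Metric.ball θ₀ ε, g θ₁ = 0 := by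
      intro θ₁ hθ₁
      obtain ⟨δ, hδ, hsub⟩ := Metric.isOpen_iff.mp Metric.isOpen_ball θ₁ hθ₁
      have hB := partB R hR v u hv hu hstream hF θ₁ δ hδ (fun θ hθ => hvzz θ (hsub hθ))
      exact (mul_eq_zero.mp hB).resolve_right (hball hθ₁)
    have hev : g =ᶠ[𝓝 θ₀] fun _ => 0 :=
      eventually_of_mem (Metric.ball_mem_nhds θ₀ hε) hgz
    have h2 : HasDerivAt (fun _ : ℝ => (0:ℝ)) (g' θ₀) θ₀ :=
      (hg θ₀).congr_of_eventuallyEq hev.symm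
    exact hθ₀ (h2.unique (hasDerivAt_const θ₀ 0))
  have hgdiff : Differentiable ℝ g := fun θ => (hg θ).differentiableAt
  have hgd : ∀ θ, deriv g θ = 0 := fun θ => by rw [(hg θ).deriv]; exact hzero θ
  refine ⟨g 0, fun x hx => ?_⟩
  obtain ⟨θ, hθ⟩ := circ_surj R hR x hx
  calc lapW (closedBall 0 R) u x = g θ := by rw [← hθ]
    _ = g 0 := is_const_of_deriv_eq_zero hgdiff hgd θ 0
end
end
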